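/- arXiv:2403.05133 — 3 statements merged into one kernel-verified Lean document; each statement's English description precedes it below -/
import Mathlib

section
/- Let G be a connected finite simple graph on a vertex set V with at least 2 vertices, with maximum vertex degree d_max(G) and largest Laplacian eigenvalue λ_max(L(G)). Then λ_max(L(G)) = 2·d_max(G) if and only if G is regular (every vertex has degree d_max(G)) and bipartite (the vertex set can be partitioned into two sets such that every edge of G joins a vertex of one set to a vertex of the other). -/
open Matrix Finset

section Aux

variable {V : Type*} [Fintype V] [DecidableEq V]

private lemma myQuad (G : SimpleGraph V) [DecidableRel G.Adj] (x : V → ℝ) :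
    x ⬝ᵥ (G.lapMatrix ℝ *ᵥ x) =
      (∑ i : V, ∑ j : V, if G.Adj i j then (x i - x j)^2 else 0) / 2 := by
  rw [← Matrix.toLinearMap₂'_apply', SimpleGraph.lapMatrix_toLinearMap₂']

private lemma sumAdjSq (G : SimpleGraph V) [DecidableRel G.Adj] (x : V → ℝ) :
    ∑ i : V, ∑ j : V, (if G.Adj i j then (x i)^2 else 0)
      = ∑ v : V, (G.degree v : ℝ) * (x v)^2 := by
  refine Finset.sum_congr rfl fun i _ => ?_
  rw [SimpleGraph.degree_eq_sum_if_adj (G := G) (R := ℝ) i, Finset.sum_mul]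
  refine Finset.sum_congr rfl fun j _ => ?_
  split <;> simp

private lemma sumAdjSq' (G : SimpleGraph V) [DecidableRel G.Adj] (x : V → ℝ) :
    ∑ i : V, ∑ j : V, (if G.Adj i j then (x j)^2 else 0)
      = ∑ v : V, (G.degree v : ℝ) * (x v)^2 := by
  rw [Finset.sum_comm]
  have h : ∀ j i : V, (if G.Adj i j then (x j)^2 else (0:ℝ))
      = (if G.Adj j i then (x j)^2 else 0) := by
    intro j i
    by_cases hij : G.Adj i j
    · rw [if_pos hij, if_pos hij.symm]
    · rw [if_neg hij, if_neg fun hc => hij hc.symm]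
  simp_rw [h]
  exact sumAdjSq G x

private lemma myKey (G : SimpleGraph V) [DecidableRel G.Adj] (x : V → ℝ) :
    (∑ i : V, ∑ j : V, if G.Adj i j then (x i + x j)^2 else 0)
      + (∑ i : V, ∑ j : V, if G.Adj i j then (x i - x j)^2 else 0)
    = 4 * ∑ v : V, (G.degree v : ℝ) * (x v)^2 := by
  have h : ∀ i j : V, ((if G.Adj i j then (x i + x j)^2 else (0:ℝ))
        + (if G.Adj i j then (x i - x j)^2 else 0))
      = (if G.Adj i j then 2*(x i)^2 else 0) + (if G.Adj i j then 2*(x j)^2 else 0) := by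
    intro i j; split <;> ring
  rw [← Finset.sum_add_distrib]
  simp_rw [← Finset.sum_add_distrib, h, Finset.sum_add_distrib, ← mul_ite_zero,
    ← Finset.mul_sum]
  rw [sumAdjSq, sumAdjSq']
  ring

private lemma plusNonneg (G : SimpleGraph V) [DecidableRel G.Adj] (x : V → ℝ) :
    0 ≤ ∑ i : V, ∑ j : V, (if G.Adj i j then (x i + x j)^2 else 0) := by
  refine Finset.sum_nonneg fun i _ => Finset.sum_nonneg fun j _ => ?_
  split <;> positivity

private lemma rayleighBound (G : SimpleGraph V) [DecidableRel G.Adj] (dmax : ℕ)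
    (hdle : ∀ v : V, (G.degree v : ℝ) ≤ dmax) (x : V → ℝ) :
    x ⬝ᵥ (G.lapMatrix ℝ *ᵥ x) ≤ 2 * dmax * ∑ v : V, (x v)^2 := by
  have h1 := myKey G x
  have h2 := plusNonneg G x
  have h3 : ∑ v : V, (G.degree v : ℝ) * (x v)^2 ≤ ∑ v : V, (dmax : ℝ) * (x v)^2 :=
    Finset.sum_le_sum fun v _ => mul_le_mul_of_nonneg_right (hdle v) (sq_nonneg _)
  rw [myQuad, ← Finset.mul_sum] at *
  linarith

private lemma eigQuad (G : SimpleGraph V) [DecidableRel G.Adj]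
    (hH : (G.lapMatrix ℝ).IsHermitian) (i : V) :
    hH.eigenvalues i
      = (⇑(hH.eigenvectorBasis i)) ⬝ᵥ (G.lapMatrix ℝ *ᵥ ⇑(hH.eigenvectorBasis i)) := by
  rw [hH.eigenvalues_eq i]
  simp

private lemma eigNorm (G : SimpleGraph V) [DecidableRel G.Adj]
    (hH : (G.lapMatrix ℝ).IsHermitian) (i : V) :
    ∑ v : V, (hH.eigenvectorBasis i v)^2 = 1 := by
  have h1 := hH.eigenvectorBasis.orthonormal.1 i
  have h2 : inner (𝕜 := ℝ) (hH.eigenvectorBasis i) (hH.eigenvectorBasis i) = 1 := by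
    rw [real_inner_self_eq_norm_sq, h1]; norm_num
  rw [← h2, PiLp.inner_apply]
  simp [sq]

private lemma eigVecNeZero (G : SimpleGraph V) [DecidableRel G.Adj]
    (hH : (G.lapMatrix ℝ).IsHermitian) (i : V) :
    ∃ v : V, hH.eigenvectorBasis i v ≠ 0 := by
  by_contra h
  push_neg at h
  have := eigNorm G hH i
  simp [h] at this

private lemma specMem (G : SimpleGraph V) [DecidableRel G.Adj] (μ : ℝ) (y : V → ℝ)
    (hy : G.lapMatrix ℝ *ᵥ y = μ • y) (hyne : y ≠ 0) :
    ∃ i : V, ((G.posSemidef_lapMatrix ℝ).1).eigenvalues i = μ := by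
  have hev : Module.End.HasEigenvalue (Matrix.toLin' (G.lapMatrix ℝ)) μ :=
    Module.End.hasEigenvalue_of_hasEigenvector
      ⟨Module.End.mem_eigenspace_iff.mpr (by rw [Matrix.toLin'_apply, hy]), hyne⟩
  have hspec : μ ∈ spectrum ℝ (G.lapMatrix ℝ) := by
    rw [← AlgEquiv.spectrum_eq (Matrix.toLinAlgEquiv (Pi.basisFun ℝ V)),
      ← Module.End.hasEigenvalue_iff_mem_spectrum]
    exact hev
  rw [Matrix.IsHermitian.spectrum_real_eq_range_eigenvalues (G.posSemidef_lapMatrix ℝ).1] at hspec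
  exact hspec.imp fun i hi => hi

end Aux

/-- For a connected finite simple graph on at least 2 vertices, the largest Laplacian
eigenvalue equals `2·d_max` if and only if the graph is regular and bipartite. -/
theorem lapMatrix_largest_eigenvalue_eq_two_mul_maxDegree_iff
    {V : Type*} [Fintype V] [DecidableEq V]
    (G : SimpleGraph V) [DecidableRel G.Adj]
    (hV : 2 ≤ Fintype.card V) (hconn : G.Connected)
    (dmax : ℕ) (hd : dmax = Finset.univ.sup (fun v => G.degree v))
    (lammax : ℝ)
    (hlam : lammax = ⨆ i : V, (G.posSemidef_lapMatrix ℝ).1.eigenvalues i) :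
    lammax = 2 * dmax ↔
      ((∀ v : V, G.degree v = dmax) ∧
        ∃ A : Set V, ∀ u w : V, G.Adj u w → ((u ∈ A ∧ w ∉ A) ∨ (u ∉ A ∧ w ∈ A))) := by
  classical
  have hH : (G.lapMatrix ℝ).IsHermitian := (G.posSemidef_lapMatrix ℝ).1
  have hne : Nonempty V := Fintype.card_pos_iff.mp (by omega)
  have hdle : ∀ v : V, (G.degree v : ℝ) ≤ dmax := fun v => by
    have h1 : G.degree v ≤ Finset.univ.sup fun v => G.degree v :=
      Finset.le_sup (f := fun v => G.degree v) (Finset.mem_univ v)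
    rw [← hd] at h1
    exact_mod_cast h1
  have hbound : ∀ i : V, hH.eigenvalues i ≤ 2 * dmax := fun i => by
    have h : hH.eigenvalues i ≤ 2 * dmax * ∑ v : V, (hH.eigenvectorBasis i v)^2 := by
      rw [eigQuad G hH i]
      exact rayleighBound G dmax hdle _
    rwa [eigNorm G hH i, mul_one] at h
  have hlamle : lammax ≤ 2 * dmax := by
    rw [hlam]; exact ciSup_le hbound
  constructor
  · intro h
    obtain ⟨i₀, hi₀⟩ := Finite.exists_max hH.eigenvalues
    have hsup : hH.eigenvalues i₀ = 2 * dmax := by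
      refine le_antisymm (hbound i₀) ?_
      calc (2:ℝ) * dmax = lammax := h.symm
        _ = ⨆ i, hH.eigenvalues i := hlam
        _ ≤ hH.eigenvalues i₀ := ciSup_le hi₀
    set x : V → ℝ := ⇑(hH.eigenvectorBasis i₀) with hxdef
    have hquad : x ⬝ᵥ (G.lapMatrix ℝ *ᵥ x) = 2 * dmax := (eigQuad G hH i₀).symm.trans hsup
    have hS : ∑ v : V, (x v)^2 = 1 := eigNorm G hH i₀
    have hkey := myKey G x
    rw [myQuad] at hquad
    have hSp := plusNonneg G x
    have h3 : ∑ v : V, (G.degree v : ℝ) * (x v)^2 ≤ (dmax:ℝ) := by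
      calc ∑ v : V, (G.degree v : ℝ) * (x v)^2
          ≤ ∑ v : V, (dmax : ℝ) * (x v)^2 :=
            Finset.sum_le_sum fun v _ => mul_le_mul_of_nonneg_right (hdle v) (sq_nonneg _)
        _ = dmax := by rw [← Finset.mul_sum, hS, mul_one]
    have hSp0 : (∑ i : V, ∑ j : V, if G.Adj i j then (x i + x j)^2 else 0) = 0 := by
      linarith
    have hdsum : ∑ v : V, (G.degree v : ℝ) * (x v)^2 = dmax := by linarith
    have hadjsign : ∀ u w : V, G.Adj u w → x w = - x u := by
      intro u w huw
      have h1 := (Finset.sum_eq_zero_iff_of_nonneg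
        (fun i _ => Finset.sum_nonneg fun j _ => by split <;> positivity)).mp hSp0 u
        (Finset.mem_univ u)
      have h2 := (Finset.sum_eq_zero_iff_of_nonneg
        (fun j _ => by split <;> positivity)).mp h1 w (Finset.mem_univ w)
      rw [if_pos huw] at h2
      have h4 : x u + x w = 0 := by
        have := sq_eq_zero_iff.mp h2
        linarith
      linarith
    have hdeg0 : ∑ v : V, ((dmax:ℝ) - G.degree v) * (x v)^2 = 0 := by
      simp_rw [sub_mul, Finset.sum_sub_distrib, ← Finset.mul_sum, hS, hdsum]
      ring
    have hdeg : ∀ v : V, ((dmax:ℝ) - G.degree v) * (x v)^2 = 0 := fun v =>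
      (Finset.sum_eq_zero_iff_of_nonneg
        (fun v _ => mul_nonneg (by linarith [hdle v]) (sq_nonneg _))).mp hdeg0 v
        (Finset.mem_univ v)
    have hsqconst : ∀ (u w : V), G.Walk u w → (x u)^2 = (x w)^2 := by
      intro u w p
      induction p with
      | nil => rfl
      | @cons a b c hadj p ih =>
          rw [← ih, hadjsign a b hadj]; ring
    obtain ⟨v₀, hv₀⟩ := eigVecNeZero G hH i₀
    have hxne : ∀ v : V, x v ≠ 0 := by
      intro v h0
      have h1 := hsqconst v₀ v (hconn.preconnected v₀ v).some
      rw [h0] at h1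
      have h2 : x v₀ = 0 := by
        have h3 : x v₀ ^ 2 = 0 := by simpa using h1
        exact sq_eq_zero_iff.mp h3
      exact hv₀ h2
    refine ⟨fun v => ?_, {v | 0 < x v}, fun u w huw => ?_⟩
    · rcases mul_eq_zero.mp (hdeg v) with h1 | h1
      · have : (dmax:ℝ) = G.degree v := by linarith
        exact_mod_cast this.symm
      · exact absurd (sq_eq_zero_iff.mp h1) (hxne v)
    · have hw := hadjsign u w huw
      rcases (hxne u).lt_or_gt with h1 | h1
      · refine Or.inr ⟨fun hc => ?_, ?_⟩
        · have : 0 < x u := hc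
          linarith
        · show 0 < x w
          rw [hw]; linarith
      · refine Or.inl ⟨h1, fun hc => ?_⟩
        have : 0 < x w := hc
        rw [hw] at this; linarith
  · rintro ⟨hreg, A, hA⟩
    set y : V → ℝ := fun v => if v ∈ A then 1 else -1 with hydef
    have hysign : ∀ u w : V, G.Adj u w → y w = - y u := by
      intro u w huw
      rcases hA u w huw with ⟨h1, h2⟩ | ⟨h1, h2⟩ <;> simp [hydef, h1, h2]
    have hy : G.lapMatrix ℝ *ᵥ y = (2 * (dmax:ℝ)) • y := by
      ext v
      rw [SimpleGraph.lapMatrix_mulVec_apply]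
      have hsum : ∑ u ∈ G.neighborFinset v, y u = ∑ _u ∈ G.neighborFinset v, (- y v) :=
        Finset.sum_congr rfl fun u hu =>
          hysign v u ((SimpleGraph.mem_neighborFinset G v u).mp hu)
      rw [hsum, Finset.sum_const, nsmul_eq_mul]
      simp only [Pi.smul_apply, smul_eq_mul]
      rw [show (G.neighborFinset v).card = G.degree v from rfl, hreg v]
      ring
    have hyne : y ≠ 0 := by
      intro h0
      obtain ⟨v⟩ := hne
      have := congrFun h0 v
      by_cases hv : v ∈ A <;> simp [hydef, hv] at this
    obtain ⟨i, hi⟩ := specMem G (2 * (dmax:ℝ)) y hy hyne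
    have hge : (2:ℝ) * dmax ≤ lammax := by
      rw [hlam, ← hi]
      exact le_ciSup (Set.Finite.bddAbove (Set.finite_range _)) i
    linarith
end

section
/- Let G be a connected finite simple graph on a vertex set V with at least 2 vertices and with every vertex degree at least 1. Let ν₂ be the second smallest eigenvalue of the normalized Laplacian matrix 𝓛(G) = I − D(G)^{-1/2} A(G) D(G)^{-1/2}. Then Φ(G) ≤ √(2·ν₂), where Φ(G) is the conductance of G. -/
/-- The volume of a vertex subset `S`: the sum of the degrees of the vertices in `S`. -/
noncomputable def graphVol {V : Type*} [Fintype V] (G : SimpleGraph V) (S : Finset V) : ℕ :=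
  ∑ v ∈ S, (G.neighborSet v).ncard

/-- The boundary of a vertex subset `S`: the set of edges of `G` with exactly one
endpoint in `S`. -/
def graphBoundary {V : Type*} [Fintype V] (G : SimpleGraph V) (S : Finset V) : Set (Sym2 V) :=
  {e ∈ G.edgeSet | ∃ u w : V, e = s(u, w) ∧ u ∈ S ∧ w ∉ S}

/-- The conductance of `G`: the minimum over all nonempty proper vertex subsets `S` of
`|∂S| / min (vol S) (vol Sᶜ)`. -/
noncomputable def conductance {V : Type*} [Fintype V] [DecidableEq V] (G : SimpleGraph V) : ℝ :=
  sInf {x : ℝ | ∃ S : Finset V, S.Nonempty ∧ S ≠ Finset.univ ∧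
    x = (graphBoundary G S).ncard /
      min ((graphVol G S : ℝ)) ((graphVol G Sᶜ : ℝ))}

/-- The normalized Laplacian matrix `𝓛(G) = I − D^{-1/2} A D^{-1/2}`. -/
noncomputable def normLap {V : Type*} [Fintype V] [DecidableEq V]
    (G : SimpleGraph V) [DecidableRel G.Adj] : Matrix V V ℝ :=
  1 - (Matrix.diagonal fun v => (Real.sqrt (G.degree v))⁻¹) * (G.adjMatrix ℝ) *
    (Matrix.diagonal fun v => (Real.sqrt (G.degree v))⁻¹)

open Classical in
/-- The eigenvalues of a real symmetric matrix listed in increasing order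
(with multiplicity), indexed by `Fin (Fintype.card V)`. -/
noncomputable def sortedEigs {V : Type*} [Fintype V] [DecidableEq V] (A : Matrix V V ℝ) :
    Fin (Fintype.card V) → ℝ :=
  if hA : A.IsHermitian then
    fun i => hA.eigenvalues₀ (Tuple.sort hA.eigenvalues₀ i)
  else 0


set_option linter.unusedSectionVars false
set_option maxHeartbeats 1000000

section CheegerProof

open Finset

variable {V : Type*} [Fintype V] [DecidableEq V] (G : SimpleGraph V) [DecidableRel G.Adj]

lemma ncard_neighborSet (v : V) : (G.neighborSet v).ncard = G.degree v := by
  rw [Set.ncard_eq_toFinset_card']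
  rfl

lemma graphVol_eq (S : Finset V) : graphVol G S = ∑ v ∈ S, G.degree v := by
  simp [graphVol, ncard_neighborSet]

lemma graphVol_mono {S T : Finset V} (h : S ⊆ T) : graphVol G S ≤ graphVol G T := by
  rw [graphVol_eq, graphVol_eq]; exact Finset.sum_le_sum_of_subset h

lemma graphVol_compl (S : Finset V) : graphVol G Sᶜ = graphVol G univ - graphVol G S := by
  rw [graphVol_eq, graphVol_eq, graphVol_eq]
  have := Finset.sum_add_sum_compl S (fun v => G.degree v)
  omega

lemma graphVol_add_compl (S : Finset V) : graphVol G S + graphVol G Sᶜ = graphVol G univ := by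
  rw [graphVol_eq, graphVol_eq, graphVol_eq]
  exact Finset.sum_add_sum_compl S _

/-- boundary cardinality as a count of ordered adjacent pairs crossing S outward -/
lemma graphBoundary_ncard (S : Finset V) :
    (graphBoundary G S).ncard
      = ((univ : Finset (V × V)).filter (fun p => G.Adj p.1 p.2 ∧ p.1 ∈ S ∧ p.2 ∉ S)).card := by
  classical
  have himg : graphBoundary G S =
      ↑(((univ : Finset (V × V)).filter (fun p => G.Adj p.1 p.2 ∧ p.1 ∈ S ∧ p.2 ∉ S)).image
        (fun p => s(p.1, p.2))) := by
    ext e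
    simp only [graphBoundary, Set.mem_setOf_eq, coe_image, Set.mem_image, mem_coe, mem_filter,
      mem_univ, true_and]
    constructor
    · rintro ⟨he, u, w, rfl, hu, hw⟩
      refine ⟨(u, w), ⟨?_, hu, hw⟩, rfl⟩
      simpa [SimpleGraph.mem_edgeSet] using he
    · rintro ⟨⟨u, w⟩, ⟨hadj, hu, hw⟩, rfl⟩
      exact ⟨by simpa [SimpleGraph.mem_edgeSet] using hadj, u, w, rfl, hu, hw⟩
  rw [himg, Set.ncard_coe_finset]
  apply Finset.card_image_of_injOn
  rintro ⟨u, w⟩ hp ⟨u', w'⟩ hq h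
  simp only [mem_coe, mem_filter, mem_univ, true_and] at hp hq
  rw [Sym2.eq_iff] at h
  rcases h with ⟨rfl, rfl⟩ | ⟨rfl, rfl⟩
  · rfl
  · exact absurd hp.2.1 hq.2.2

lemma normLap_isHermitian : (normLap G).IsHermitian := by
  unfold normLap
  apply Matrix.IsHermitian.sub Matrix.isHermitian_one
  unfold Matrix.IsHermitian
  rw [Matrix.conjTranspose_eq_transpose_of_trivial, Matrix.transpose_mul, Matrix.transpose_mul,
    Matrix.diagonal_transpose, SimpleGraph.transpose_adjMatrix, Matrix.mul_assoc]

lemma normLap_apply (u v : V) :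
    normLap G u v = (if u = v then (1:ℝ) else 0)
      - (Real.sqrt (G.degree u))⁻¹ * (G.adjMatrix ℝ u v) * (Real.sqrt (G.degree v))⁻¹ := by
  simp [normLap, Matrix.sub_apply, Matrix.one_apply, Matrix.mul_diagonal, Matrix.diagonal_mul,
    mul_comm, mul_assoc, mul_left_comm]

/-- Spectral lemma: a nonzero test vector orthogonal to √deg with Rayleigh quotient ≤ ν₂. -/
lemma exists_test_vector (hV : 2 ≤ Fintype.card V) :
    ∃ f : V → ℝ, (∑ v, Real.sqrt (G.degree v) * f v = 0) ∧ (0 < ∑ v, (f v)^2) ∧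
      (∑ u, ∑ v, normLap G u v * f u * f v)
        ≤ (sortedEigs (normLap G) ⟨1, by linarith⟩) * ∑ v, (f v)^2 := by
  classical
  set L := normLap G with hLdef
  have hL : L.IsHermitian := normLap_isHermitian G
  set ν₂ := sortedEigs L ⟨1, by omega⟩ with hν₂
  set σ := Tuple.sort hL.eigenvalues₀ with hσ
  have hν₂' : ν₂ = hL.eigenvalues₀ (σ ⟨1, by omega⟩) := by
    rw [hν₂, sortedEigs, dif_pos hL]
  set eqc : Fin (Fintype.card V) ≃ V := Fintype.equivOfCardEq (Fintype.card_fin _) with heqc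
  set j₀ : V := eqc (σ ⟨0, by omega⟩) with hj₀
  set j₁ : V := eqc (σ ⟨1, by omega⟩) with hj₁
  have hei : ∀ i : Fin (Fintype.card V), hL.eigenvalues (eqc (σ i)) = hL.eigenvalues₀ (σ i) := by
    intro i
    rw [Matrix.IsHermitian.eigenvalues]
    congr 1
    exact eqc.symm_apply_apply _
  have hle : hL.eigenvalues j₀ ≤ ν₂ := by
    rw [hj₀, hei, hν₂']
    exact Tuple.monotone_sort hL.eigenvalues₀ (by simp [Fin.le_def])
  have heq1 : hL.eigenvalues j₁ = ν₂ := by rw [hj₁, hei, hν₂']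
  set B := hL.eigenvectorBasis with hB
  -- orthonormality as sums
  have horth : ∀ i j : V, ∑ v, B i v * B j v = if i = j then (1:ℝ) else 0 := by
    intro i j
    have := (orthonormal_iff_ite.mp B.orthonormal) i j
    rw [PiLp.inner_apply] at this
    simp [RCLike.inner_apply, starRingEnd_apply] at this
    rw [← this]
    exact Finset.sum_congr rfl (fun x _ => mul_comm _ _)
  -- eigen equation as sums
  have heig : ∀ (j : V) (u : V), ∑ v, L u v * B j v = hL.eigenvalues j * B j u := by
    intro j u
    have := congrFun (hL.mulVec_eigenvectorBasis j) u
    simpa [Matrix.mulVec, dotProduct] using this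
  set w : V → ℝ := fun v => Real.sqrt (G.degree v) with hw
  set c₀ : ℝ := ∑ v, B j₀ v * w v with hc₀
  set c₁ : ℝ := ∑ v, B j₁ v * w v with hc₁
  have hne : j₀ ≠ j₁ := by
    simp only [hj₀, hj₁, ne_eq, EmbeddingLike.apply_eq_iff_eq]
    intro h
    simp [Fin.ext_iff] at h
  -- quadratic form of a combination a • B j₀ + b • B j₁
  have hlin2 : ∀ (p q : ℝ) (x y : V → ℝ),
      ∑ v, (p * x v + q * y v) = p * ∑ v, x v + q * ∑ v, y v := by
    intro p q x y
    rw [Finset.sum_add_distrib, Finset.mul_sum, Finset.mul_sum]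
  have hlin3 : ∀ (p q r : ℝ) (x y z : V → ℝ),
      ∑ v, (p * x v + q * y v + r * z v) = p * ∑ v, x v + q * ∑ v, y v + r * ∑ v, z v := by
    intro p q r x y z
    rw [Finset.sum_add_distrib, Finset.sum_add_distrib, Finset.mul_sum, Finset.mul_sum,
      Finset.mul_sum]
  have hquad : ∀ a b : ℝ,
      (∑ u, ∑ v, L u v * (a * B j₀ u + b * B j₁ u) * (a * B j₀ v + b * B j₁ v))
        = a^2 * hL.eigenvalues j₀ + b^2 * hL.eigenvalues j₁ := by
    intro a b
    have hinner : ∀ u : V, (∑ v, L u v * (a * B j₀ v + b * B j₁ v))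
        = a * hL.eigenvalues j₀ * B j₀ u + b * hL.eigenvalues j₁ * B j₁ u := by
      intro u
      calc (∑ v, L u v * (a * B j₀ v + b * B j₁ v))
          = ∑ v, (a * (L u v * B j₀ v) + b * (L u v * B j₁ v)) :=
            Finset.sum_congr rfl (fun v _ => by ring)
        _ = a * ∑ v, L u v * B j₀ v + b * ∑ v, L u v * B j₁ v := hlin2 _ _ _ _
        _ = _ := by rw [heig, heig]; ring
    calc (∑ u, ∑ v, L u v * (a * B j₀ u + b * B j₁ u) * (a * B j₀ v + b * B j₁ v))
        = ∑ u, (a * B j₀ u + b * B j₁ u) * (∑ v, L u v * (a * B j₀ v + b * B j₁ v)) := by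
          refine Finset.sum_congr rfl (fun u _ => ?_)
          rw [Finset.mul_sum]
          exact Finset.sum_congr rfl (fun v _ => by ring)
      _ = ∑ u, (a * B j₀ u + b * B j₁ u)
            * (a * hL.eigenvalues j₀ * B j₀ u + b * hL.eigenvalues j₁ * B j₁ u) :=
          Finset.sum_congr rfl (fun u _ => by rw [hinner])
      _ = ∑ u, ((a^2 * hL.eigenvalues j₀) * (B j₀ u * B j₀ u)
            + (a * b * (hL.eigenvalues j₀ + hL.eigenvalues j₁)) * (B j₀ u * B j₁ u)
            + (b^2 * hL.eigenvalues j₁) * (B j₁ u * B j₁ u)) :=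
          Finset.sum_congr rfl (fun u _ => by ring)
      _ = (a^2 * hL.eigenvalues j₀) * (∑ u, B j₀ u * B j₀ u)
            + (a * b * (hL.eigenvalues j₀ + hL.eigenvalues j₁)) * (∑ u, B j₀ u * B j₁ u)
            + (b^2 * hL.eigenvalues j₁) * (∑ u, B j₁ u * B j₁ u) := hlin3 _ _ _ _ _ _
      _ = _ := by
          rw [horth j₀ j₀, horth j₀ j₁, horth j₁ j₁, if_pos rfl, if_pos rfl, if_neg hne]
          ring
  have hnorm : ∀ a b : ℝ, (∑ v, (a * B j₀ v + b * B j₁ v)^2) = a^2 + b^2 := by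
    intro a b
    calc (∑ v, (a * B j₀ v + b * B j₁ v)^2)
        = ∑ v, ((a^2) * (B j₀ v * B j₀ v) + (2*a*b) * (B j₀ v * B j₁ v)
            + (b^2) * (B j₁ v * B j₁ v)) := Finset.sum_congr rfl (fun v _ => by ring)
      _ = (a^2) * (∑ v, B j₀ v * B j₀ v) + (2*a*b) * (∑ v, B j₀ v * B j₁ v)
            + (b^2) * (∑ v, B j₁ v * B j₁ v) := hlin3 _ _ _ _ _ _
      _ = a^2 + b^2 := by
          rw [horth j₀ j₀, horth j₀ j₁, horth j₁ j₁, if_pos rfl, if_pos rfl, if_neg hne]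
          ring
  have hwsum : ∀ a b : ℝ, (∑ v, Real.sqrt (G.degree v) * (a * B j₀ v + b * B j₁ v))
      = a * c₀ + b * c₁ := by
    intro a b
    calc (∑ v, Real.sqrt (G.degree v) * (a * B j₀ v + b * B j₁ v))
        = ∑ v, (a * (B j₀ v * w v) + b * (B j₁ v * w v)) :=
          Finset.sum_congr rfl (fun v _ => by simp only [hw]; ring)
      _ = a * ∑ v, B j₀ v * w v + b * ∑ v, B j₁ v * w v := hlin2 _ _ _ _
      _ = a * c₀ + b * c₁ := by rw [hc₀, hc₁]
  -- choose coefficients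
  by_cases hc : c₀ = 0
  · refine ⟨fun v => 1 * B j₀ v + 0 * B j₁ v, ?_, ?_, ?_⟩
    · rw [hwsum]; rw [hc]; ring
    · rw [hnorm]; norm_num
    · rw [hquad, hnorm]
      have := hle
      nlinarith [hle]
  · refine ⟨fun v => c₁ * B j₀ v + (-c₀) * B j₁ v, ?_, ?_, ?_⟩
    · rw [hwsum]; ring
    · rw [hnorm]
      have : c₀^2 > 0 := by positivity
      nlinarith
    · rw [hquad, hnorm, heq1]
      nlinarith [hle, sq_nonneg c₁, sq_nonneg c₀]

lemma adj_row_sum (u : V) : ∑ v, G.adjMatrix ℝ u v = (G.degree u : ℝ) := by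
  have := SimpleGraph.adjMatrix_mulVec_const_apply (α := ℝ) (a := 1) (G := G) (v := u)
  simpa [Matrix.mulVec, dotProduct, Function.const] using this

/-- numerator: full double sum over ordered pairs -/
noncomputable def rNum (g : V → ℝ) : ℝ := ∑ u, ∑ v, G.adjMatrix ℝ u v * (g u - g v)^2

noncomputable def rDen (g : V → ℝ) : ℝ := ∑ v, (G.degree v : ℝ) * g v^2

lemma adjMatrix_nonneg (u v : V) : (0:ℝ) ≤ G.adjMatrix ℝ u v := by
  simp only [SimpleGraph.adjMatrix_apply]
  split <;> norm_num

lemma rNum_nonneg (g : V → ℝ) : 0 ≤ rNum G g := by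
  apply Finset.sum_nonneg; intro u _
  apply Finset.sum_nonneg; intro v _
  exact mul_nonneg (adjMatrix_nonneg G u v) (sq_nonneg _)

lemma rDen_nonneg (g : V → ℝ) : 0 ≤ rDen G g := by
  apply Finset.sum_nonneg; intro v _
  positivity

lemma rNum_expand (g : V → ℝ) :
    rNum G g = 2 * rDen G g - 2 * ∑ u, ∑ v, G.adjMatrix ℝ u v * g u * g v := by
  have h1 : ∀ u v : V, G.adjMatrix ℝ u v * (g u - g v)^2
      = G.adjMatrix ℝ u v * g u^2 + G.adjMatrix ℝ u v * g v^2
        - 2 * (G.adjMatrix ℝ u v * g u * g v) := fun u v => by ring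
  have hA : (∑ u, ∑ v, G.adjMatrix ℝ u v * g u^2) = rDen G g := by
    unfold rDen
    refine Finset.sum_congr rfl (fun u _ => ?_)
    rw [← Finset.sum_mul, adj_row_sum]
  have hB : (∑ u, ∑ v, G.adjMatrix ℝ u v * g v^2) = rDen G g := by
    rw [Finset.sum_comm]
    calc (∑ v, ∑ u, G.adjMatrix ℝ u v * g v^2)
        = ∑ v, ∑ u, G.adjMatrix ℝ v u * g v^2 := by
          refine Finset.sum_congr rfl (fun v _ => Finset.sum_congr rfl (fun u _ => ?_))
          congr 1
          simp [SimpleGraph.adjMatrix_apply, SimpleGraph.adj_comm]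
      _ = rDen G g := by
          unfold rDen
          refine Finset.sum_congr rfl (fun v _ => ?_)
          rw [← Finset.sum_mul, adj_row_sum]
  unfold rNum
  calc (∑ u, ∑ v, G.adjMatrix ℝ u v * (g u - g v)^2)
      = ∑ u, ((∑ v, G.adjMatrix ℝ u v * g u^2) + (∑ v, G.adjMatrix ℝ u v * g v^2)
          - 2 * ∑ v, G.adjMatrix ℝ u v * g u * g v) := by
        refine Finset.sum_congr rfl (fun u _ => ?_)
        rw [Finset.sum_congr rfl (fun v _ => h1 u v), Finset.sum_sub_distrib,
          Finset.sum_add_distrib, Finset.mul_sum]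
    _ = (∑ u, ∑ v, G.adjMatrix ℝ u v * g u^2) + (∑ u, ∑ v, G.adjMatrix ℝ u v * g v^2)
          - 2 * ∑ u, ∑ v, G.adjMatrix ℝ u v * g u * g v := by
        rw [Finset.sum_sub_distrib, Finset.sum_add_distrib, Finset.mul_sum]
    _ = _ := by rw [hA, hB]; ring

/-- From the test vector, produce a Rayleigh test function `g` for the quotient form. -/
lemma exists_rayleigh (hdeg : ∀ v : V, 1 ≤ G.degree v) (ν₂ : ℝ)
    (hf : ∃ f : V → ℝ, (∑ v, Real.sqrt (G.degree v) * f v = 0) ∧ (0 < ∑ v, (f v)^2) ∧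
      (∑ u, ∑ v, normLap G u v * f u * f v) ≤ ν₂ * ∑ v, (f v)^2) :
    ∃ g : V → ℝ, (∑ v, (G.degree v : ℝ) * g v = 0) ∧ 0 < rDen G g ∧
      rNum G g ≤ 2 * ν₂ * rDen G g := by
  obtain ⟨f, horthf, hposf, hquadf⟩ := hf
  have hsq : ∀ v : V, Real.sqrt (G.degree v) > 0 := by
    intro v
    apply Real.sqrt_pos.mpr
    exact_mod_cast Nat.lt_of_lt_of_le Nat.zero_lt_one (hdeg v)
  have hss : ∀ v : V, Real.sqrt (G.degree v) * Real.sqrt (G.degree v) = (G.degree v : ℝ) :=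
    fun v => Real.mul_self_sqrt (by positivity)
  set g : V → ℝ := fun v => f v * (Real.sqrt (G.degree v))⁻¹ with hg
  have hfg : ∀ v : V, f v = g v * Real.sqrt (G.degree v) := by
    intro v
    have h := (hsq v).ne'
    rw [hg]
    field_simp
  have hden : rDen G g = ∑ v, (f v)^2 := by
    unfold rDen
    refine Finset.sum_congr rfl (fun v _ => ?_)
    have h := (hsq v).ne'
    have hd : ((G.degree v : ℝ)) ≠ 0 := (Nat.cast_pos.mpr (hdeg v)).ne'
    rw [hg]
    nth_rewrite 1 [← hss v]
    field_simp [hd]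
  have horth : ∑ v, (G.degree v : ℝ) * g v = 0 := by
    rw [← horthf]
    refine Finset.sum_congr rfl (fun v _ => ?_)
    have h := (hsq v).ne'
    rw [hg]
    nth_rewrite 1 [← hss v]
    field_simp
  have hquad : (∑ u, ∑ v, normLap G u v * f u * f v)
      = rDen G g - ∑ u, ∑ v, G.adjMatrix ℝ u v * g u * g v := by
    have hpt : ∀ u v : V, normLap G u v * f u * f v
        = (if u = v then (1:ℝ) else 0) * f u * f v - G.adjMatrix ℝ u v * g u * g v := by
      intro u v
      rw [normLap_apply G u v, hg]
      have h1 := (hsq u).ne'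
      have h2 := (hsq v).ne'
      field_simp
    calc (∑ u, ∑ v, normLap G u v * f u * f v)
        = ∑ u, ((∑ v, (if u = v then (1:ℝ) else 0) * f u * f v)
            - ∑ v, G.adjMatrix ℝ u v * g u * g v) := by
          refine Finset.sum_congr rfl (fun u _ => ?_)
          rw [Finset.sum_congr rfl (fun v _ => hpt u v), Finset.sum_sub_distrib]
      _ = (∑ u, ∑ v, (if u = v then (1:ℝ) else 0) * f u * f v)
            - ∑ u, ∑ v, G.adjMatrix ℝ u v * g u * g v := Finset.sum_sub_distrib _ _
      _ = _ := by
          congr 1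
          rw [hden]
          refine Finset.sum_congr rfl (fun u _ => ?_)
          have : ∀ v : V, (if u = v then (1:ℝ) else 0) * f u * f v
              = if v = u then f u * f v else 0 := by
            intro v
            by_cases h : u = v <;> simp [h, eq_comm]
          rw [Finset.sum_congr rfl (fun v _ => this v), Finset.sum_ite_eq' univ u
            (fun v => f u * f v)]
          simp [sq]
  refine ⟨g, horth, by rw [hden]; exact hposf, ?_⟩
  rw [rNum_expand]
  have : (∑ u, ∑ v, G.adjMatrix ℝ u v * g u * g v) = rDen G g
      - ∑ u, ∑ v, normLap G u v * f u * f v := by rw [hquad]; ring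
  rw [this]
  rw [hden] at *
  nlinarith [hquadf]

/-- Existence of a weighted median. -/
lemma exists_median (g : V → ℝ) (hne : (univ : Finset V).Nonempty) :
    ∃ c : ℝ, 2 * graphVol G (univ.filter (fun v => c < g v)) ≤ graphVol G univ ∧
      2 * graphVol G (univ.filter (fun v => g v < c)) ≤ graphVol G univ := by
  classical
  have hFne : ((univ.image g).filter
      (fun x => graphVol G univ ≤ 2 * graphVol G (univ.filter (fun v => g v ≤ x)))).Nonempty := by
    obtain ⟨x₀, hx₀mem, hx₀⟩ := Finset.exists_max_image univ g hne
    refine ⟨g x₀, ?_⟩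
    rw [mem_filter]
    refine ⟨mem_image_of_mem g hx₀mem, ?_⟩
    have : univ.filter (fun v => g v ≤ g x₀) = univ := by
      apply Finset.filter_true_of_mem
      intro v _
      exact hx₀ v (mem_univ v)
    rw [this]
    omega
  set c := ((univ.image g).filter
      (fun x => graphVol G univ ≤ 2 * graphVol G (univ.filter (fun v => g v ≤ x)))).min' hFne
    with hcdef
  have hcmem := Finset.min'_mem _ hFne
  rw [← hcdef, mem_filter] at hcmem
  refine ⟨c, ?_, ?_⟩
  · have hcompl : univ.filter (fun v => c < g v) = (univ.filter (fun v => g v ≤ c))ᶜ := by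
      ext v
      simp [not_le]
    rw [hcompl]
    have h1 := graphVol_add_compl G (univ.filter (fun v => g v ≤ c))
    have h2 := hcmem.2
    omega
  · by_cases hempty : (univ.filter (fun v => g v < c)).Nonempty
    · obtain ⟨x, hxmem, hx⟩ := Finset.exists_max_image _ g hempty
      rw [mem_filter] at hxmem
      have hxnotF : g x ∉ (univ.image g).filter
          (fun y => graphVol G univ ≤ 2 * graphVol G (univ.filter (fun v => g v ≤ y))) := by
        intro hmem
        have := Finset.min'_le _ _ hmem
        rw [← hcdef] at this
        exact absurd this (not_le.mpr hxmem.2)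
      have hlt : ¬ (graphVol G univ ≤ 2 * graphVol G (univ.filter (fun v => g v ≤ g x))) := by
        intro h
        exact hxnotF (by rw [mem_filter]; exact ⟨mem_image_of_mem g (mem_univ x), h⟩)
      push_neg at hlt
      have hsub : univ.filter (fun v => g v < c) ⊆ univ.filter (fun v => g v ≤ g x) := by
        intro v hv
        rw [mem_filter] at hv ⊢
        exact ⟨mem_univ v, hx v (by rw [mem_filter]; exact ⟨mem_univ v, hv.2⟩)⟩
      have := graphVol_mono G hsub
      omega
    · rw [Finset.not_nonempty_iff_eq_empty] at hempty
      rw [hempty]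
      simp [graphVol]

lemma key_pointwise (x y : ℝ) :
    (max x 0 - max y 0)^2 + (max (-x) 0 - max (-y) 0)^2 ≤ (x - y)^2 := by
  rcases le_total x 0 with hx | hx <;> rcases le_total y 0 with hy | hy <;>
    simp [max_eq_left, max_eq_right, hx, hy, neg_nonneg.mpr, neg_nonpos.mpr] <;> nlinarith

/-- The splitting step: from a Rayleigh test function to a nonnegative one supported on
at most half the volume. -/
lemma exists_halfsupported (hne : (univ : Finset V).Nonempty) (ν₂ : ℝ)
    (hg : ∃ g : V → ℝ, (∑ v, (G.degree v : ℝ) * g v = 0) ∧ 0 < rDen G g ∧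
      rNum G g ≤ 2 * ν₂ * rDen G g) :
    ∃ h : V → ℝ, (∀ v, 0 ≤ h v) ∧ 0 < rDen G h ∧ rNum G h ≤ 2 * ν₂ * rDen G h ∧
      2 * graphVol G (univ.filter (fun v => 0 < h v)) ≤ graphVol G univ := by
  classical
  obtain ⟨g, horth, hden, hnum⟩ := hg
  obtain ⟨c, hc1, hc2⟩ := exists_median G g hne
  have hν : 0 ≤ 2 * ν₂ := by nlinarith [rNum_nonneg G g]
  set gp : V → ℝ := fun v => max (g v - c) 0 with hgp
  set gm : V → ℝ := fun v => max (c - g v) 0 with hgm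
  have hsupp_p : univ.filter (fun v => 0 < gp v) = univ.filter (fun v => c < g v) := by
    apply Finset.filter_congr
    intro v _
    simp [hgp, sub_pos, lt_max_iff]
  have hsupp_m : univ.filter (fun v => 0 < gm v) = univ.filter (fun v => g v < c) := by
    apply Finset.filter_congr
    intro v _
    simp [hgm, sub_pos, lt_max_iff]
  have hnum_split : rNum G gp + rNum G gm ≤ rNum G g := by
    unfold rNum
    rw [← Finset.sum_add_distrib]
    apply Finset.sum_le_sum
    intro u _
    rw [← Finset.sum_add_distrib]
    apply Finset.sum_le_sum
    intro v _
    have key := key_pointwise (g u - c) (g v - c)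
    have h1 : gm u = max (-(g u - c)) 0 := by rw [hgm]; ring_nf
    have h2 : gm v = max (-(g v - c)) 0 := by rw [hgm]; ring_nf
    have hA := adjMatrix_nonneg G u v
    have hkey : (gp u - gp v)^2 + (gm u - gm v)^2 ≤ ((g u - c) - (g v - c))^2 := by
      rw [h1, h2]
      exact key
    nlinarith [hkey]
  have hden_split : rDen G g ≤ rDen G gp + rDen G gm := by
    have hpt : ∀ v : V, gp v ^ 2 + gm v ^ 2 = (g v - c)^2 := by
      intro v
      rcases le_total (g v) c with h | h
      · have hz : gp v = 0 := by simp [hgp, sub_nonpos.mpr h]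
        have h2 : gm v = c - g v := by simp [hgm, sub_nonneg.mpr h]
        rw [hz, h2]; ring_nf
      · have hz : gm v = 0 := by simp [hgm, sub_nonpos.mpr h]
        have h2 : gp v = g v - c := by simp [hgp, sub_nonneg.mpr h]
        rw [hz, h2]; ring_nf
    unfold rDen
    rw [← Finset.sum_add_distrib]
    have step : ∀ v : V, (G.degree v : ℝ) * gp v^2 + (G.degree v : ℝ) * gm v^2
        = (G.degree v : ℝ) * (g v - c)^2 := by
      intro v
      rw [← mul_add, hpt v]
    rw [Finset.sum_congr rfl (fun v _ => step v)]
    have expand : ∀ v : V, (G.degree v : ℝ) * (g v - c)^2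
        = (G.degree v : ℝ) * g v^2 - 2*c*((G.degree v : ℝ) * g v) + c^2 * (G.degree v : ℝ) := by
      intro v; ring
    rw [Finset.sum_congr rfl (fun v _ => expand v), Finset.sum_add_distrib,
      Finset.sum_sub_distrib, ← Finset.mul_sum, ← Finset.mul_sum, horth]
    have hpos : (0:ℝ) ≤ c^2 * ∑ v, (G.degree v : ℝ) := by positivity
    linarith
  have hmain : (rNum G gp ≤ 2 * ν₂ * rDen G gp ∧ 0 < rDen G gp)
      ∨ (rNum G gm ≤ 2 * ν₂ * rDen G gm ∧ 0 < rDen G gm) := by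
    by_contra hcon
    push_neg at hcon
    obtain ⟨h1, h2⟩ := hcon
    have hp := rDen_nonneg G gp
    have hm := rDen_nonneg G gm
    have hnp := rNum_nonneg G gp
    have hnm := rNum_nonneg G gm
    by_cases hp0 : 0 < rDen G gp
    · by_cases hm0 : 0 < rDen G gm
      · have e1 : ¬ (rNum G gp ≤ 2 * ν₂ * rDen G gp) := fun h => absurd hp0 (not_lt.mpr (h1 h))
        have e2 : ¬ (rNum G gm ≤ 2 * ν₂ * rDen G gm) := fun h => absurd hm0 (not_lt.mpr (h2 h))
        push_neg at e1 e2
        nlinarith [mul_le_mul_of_nonneg_left hden_split hν]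
      · push_neg at hm0
        have hm0' : rDen G gm = 0 := le_antisymm hm0 hm
        have hgden : rDen G g ≤ rDen G gp := by linarith
        have : rNum G gp ≤ 2 * ν₂ * rDen G gp := by
          nlinarith [mul_le_mul_of_nonneg_left hgden hν]
        exact absurd hp0 (not_lt.mpr (h1 this))
    · push_neg at hp0
      have hp0' : rDen G gp = 0 := le_antisymm hp0 hp
      have hm0 : 0 < rDen G gm := by linarith
      have hgden : rDen G g ≤ rDen G gm := by linarith
      have : rNum G gm ≤ 2 * ν₂ * rDen G gm := by
        nlinarith [mul_le_mul_of_nonneg_left hgden hν]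
      exact absurd hm0 (not_lt.mpr (h2 this))
  rcases hmain with ⟨hq, hd⟩ | ⟨hq, hd⟩
  · refine ⟨gp, fun v => le_max_right _ _, hd, hq, ?_⟩
    rw [hsupp_p]
    exact hc1
  · refine ⟨gm, fun v => le_max_right _ _, hd, hq, ?_⟩
    rw [hsupp_m]
    exact hc2

/-- The sweep-cut lemma. -/
lemma sweep_cut (hV : 2 ≤ Fintype.card V) (hdeg : ∀ v : V, 1 ≤ G.degree v) (ν₂ : ℝ)
    (hh : ∃ h : V → ℝ, (∀ v, 0 ≤ h v) ∧ 0 < rDen G h ∧ rNum G h ≤ 2 * ν₂ * rDen G h ∧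
      2 * graphVol G (univ.filter (fun v => 0 < h v)) ≤ graphVol G univ) :
    ∃ S : Finset V, S.Nonempty ∧ S ≠ univ ∧ 2 * graphVol G S ≤ graphVol G univ ∧
      ((graphBoundary G S).ncard : ℝ) ≤ Real.sqrt (2 * ν₂) * graphVol G S := by
  classical
  obtain ⟨h, hpos, hden, hnum, hhalf⟩ := hh
  set m := Fintype.card V with hm
  set e := Fintype.equivFin V with he
  set σ := Tuple.sort (fun i : Fin m => -h (e.symm i)) with hσ
  set vtx : Fin m → V := fun i => e.symm (σ i) with hvtx
  have hbij : Function.Bijective vtx := (e.symm.bijective.comp σ.bijective)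
  have hsum1 : ∀ F : V → ℝ, ∑ i : Fin m, F (vtx i) = ∑ v, F v := by
    intro F
    exact Fintype.sum_bijective vtx hbij _ _ (fun i => rfl)
  -- the sorted values, extended by 0
  set w : ℕ → ℝ := fun k => if hk : k < m then h (vtx ⟨k, hk⟩) else 0 with hw
  have hwi : ∀ i : Fin m, w ↑i = h (vtx i) := by
    intro i
    rw [hw]
    simp only [i.isLt, dif_pos]
  have hw0 : ∀ k, 0 ≤ w k := by
    intro k
    rw [hw]
    dsimp only
    split
    · exact hpos _
    · exact le_refl 0
  have hwanti : Antitone w := by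
    intro a b hab
    by_cases hb : b < m
    · have ha : a < m := lt_of_le_of_lt hab hb
      have hmono := Tuple.monotone_sort (fun i : Fin m => -h (e.symm i))
      have := hmono (a := ⟨a, ha⟩) (b := ⟨b, hb⟩) hab
      simp only [Function.comp_apply] at this
      rw [hw]
      simp only [ha, hb, dif_pos]
      rw [hvtx]
      simpa using this
    · have hwb : w b = 0 := by
        rw [hw]
        dsimp only
        rw [dif_neg hb]
      rw [hwb]
      exact hw0 a
  set q : ℕ → ℝ := fun k => w k ^ 2 with hq
  set Δ : ℕ → ℝ := fun k => q k - q (k + 1) with hΔ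
  have hΔnonneg : ∀ k, 0 ≤ Δ k := by
    intro k
    have h1 := hwanti (Nat.le_succ k)
    have h2 := hw0 (k+1)
    rw [hΔ, hq]
    simp only
    nlinarith
  have hqm : q m = 0 := by
    rw [hq, hw]
    simp
  have htel : ∀ a b : ℕ, a ≤ b → ∑ k ∈ Ico a b, Δ k = q a - q b := by
    intro a b hab
    rw [hΔ, Finset.sum_Ico_eq_sub _ hab, Finset.sum_range_sub' q, Finset.sum_range_sub' q]
    ring
  -- prefix sets
  set P : ℕ → Finset V := fun k => (univ.filter (fun i : Fin m => (i : ℕ) ≤ k)).image vtx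
    with hP
  have hmemP : ∀ (i : Fin m) (k : ℕ), vtx i ∈ P k ↔ (i : ℕ) ≤ k := by
    intro i k
    rw [hP]
    simp only [mem_image, mem_filter, mem_univ, true_and]
    constructor
    · rintro ⟨j, hj, hji⟩
      rwa [← hbij.1 hji]
    · intro hik
      exact ⟨i, hik, rfl⟩
  set a' : Fin m → Fin m → ℝ := fun i j => G.adjMatrix ℝ (vtx i) (vtx j) with ha'
  have ha'symm : ∀ i j, a' i j = a' j i := by
    intro i j
    rw [ha']
    simp only [SimpleGraph.adjMatrix_apply]
    simp [SimpleGraph.adj_comm]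
  set s : Fin m → Fin m → ℝ := fun i j => ∑ k ∈ Ico (i : ℕ) (j : ℕ), Δ k with hs
  set T2 : ℝ := ∑ i : Fin m, ∑ j : Fin m, a' i j * s i j with hT2
  set D : ℕ → ℝ := fun k => if hk : k < m then (G.degree (vtx ⟨k, hk⟩) : ℝ) else 0 with hD
  have hDnonneg : ∀ k, 0 ≤ D k := by
    intro k
    rw [hD]
    dsimp only
    split
    · positivity
    · exact le_refl 0
  set VolR : ℕ → ℝ := fun k => ∑ i ∈ range (k + 1), D i with hVolR
  have hVolRnonneg : ∀ k, 0 ≤ VolR k := fun k => Finset.sum_nonneg (fun i _ => hDnonneg i)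
  set EE : ℕ → ℝ := fun k => ∑ i : Fin m, ∑ j : Fin m,
    (if G.Adj (vtx i) (vtx j) ∧ (i : ℕ) ≤ k ∧ ¬ ((j : ℕ) ≤ k) then (1:ℝ) else 0) with hEE
  -- the denominator identity
  have hrange : ∀ F : ℕ → ℝ, ∑ i ∈ range m, F i = ∑ i : Fin m, F ↑i := fun F =>
    Finset.sum_range (fun i => F i)
  have hDi : ∀ i : Fin m, D ↑i = (G.degree (vtx i) : ℝ) := by
    intro i
    rw [hD]
    simp only [i.isLt, dif_pos]
  have hden_id : rDen G h = ∑ k ∈ range m, VolR k * Δ k := by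
    have step1 : ∀ k ∈ range m, VolR k * Δ k = ∑ i ∈ range m, (if i ≤ k then D i * Δ k else 0) := by
      intro k hk
      rw [mem_range] at hk
      rw [hVolR, Finset.sum_mul]
      have hfe : (range m).filter (fun i => i ≤ k) = range (k+1) := by
        ext i
        simp only [mem_filter, mem_range]
        omega
      rw [← hfe, Finset.sum_filter]
    rw [Finset.sum_congr rfl step1, Finset.sum_comm]
    have step2 : ∀ i ∈ range m, (∑ k ∈ range m, if i ≤ k then D i * Δ k else 0) = D i * q i := by
      intro i hi
      rw [mem_range] at hi
      rw [← Finset.sum_filter]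
      have hfe : (range m).filter (fun k => i ≤ k) = Ico i m := by
        ext k
        simp only [mem_filter, mem_range, mem_Ico]
        omega
      rw [hfe, ← Finset.mul_sum, htel i m hi.le, hqm]
      ring
    rw [Finset.sum_congr rfl step2, hrange]
    have step3 : ∀ i : Fin m, D ↑i * q ↑i = (G.degree (vtx i) : ℝ) * h (vtx i) ^ 2 := by
      intro i
      rw [hDi, hq]
      simp only
      rw [hwi]
    rw [Finset.sum_congr rfl (fun i _ => step3 i)]
    rw [hsum1 (fun v => (G.degree v : ℝ) * h v ^ 2)]
    rfl
  -- the boundary identity:  ∑ₖ EE k Δ k = T2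
  have hbd_id : ∑ k ∈ range m, EE k * Δ k = T2 := by
    have step1 : ∀ k ∈ range m, EE k * Δ k = ∑ i : Fin m, ∑ j : Fin m,
        (if G.Adj (vtx i) (vtx j) ∧ (i : ℕ) ≤ k ∧ ¬ ((j : ℕ) ≤ k) then Δ k else 0) := by
      intro k _
      rw [hEE, Finset.sum_mul]
      refine Finset.sum_congr rfl (fun i _ => ?_)
      rw [Finset.sum_mul]
      refine Finset.sum_congr rfl (fun j _ => ?_)
      split <;> simp
    rw [Finset.sum_congr rfl step1, Finset.sum_comm]
    rw [hT2]
    refine Finset.sum_congr rfl (fun i _ => ?_)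
    rw [Finset.sum_comm]
    refine Finset.sum_congr rfl (fun j _ => ?_)
    by_cases hadj : G.Adj (vtx i) (vtx j)
    · simp only [hadj, true_and]
      rw [← Finset.sum_filter]
      have hfe : (range m).filter (fun k => (i : ℕ) ≤ k ∧ ¬ ((j : ℕ) ≤ k)) = Ico (i:ℕ) (j:ℕ) := by
        ext k
        simp only [mem_filter, mem_range, mem_Ico]
        have := j.isLt
        omega
      rw [hfe, ha', hs]
      simp [hadj]
    · simp only [hadj, false_and, if_false]
      rw [ha']
      simp [hadj]
  -- symmetrized bound on T2
  have hT2swap : T2 = ∑ i : Fin m, ∑ j : Fin m, a' i j * s j i := by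
    rw [hT2, Finset.sum_comm]
    refine Finset.sum_congr rfl (fun i _ => Finset.sum_congr rfl (fun j _ => ?_))
    rw [ha'symm]
  have hskey : ∀ i j : Fin m, s i j + s j i = |w ↑i - w ↑j| * (w ↑i + w ↑j) := by
    intro i j
    rcases le_total (i : ℕ) (j : ℕ) with hij | hij
    · have h1 : s i j = q ↑i - q ↑j := htel _ _ hij
      have h2 : s j i = 0 := by
        rw [hs]
        simp only
        rw [Finset.Ico_eq_empty (by omega), Finset.sum_empty]
      have hwij : w ↑j ≤ w ↑i := hwanti hij
      rw [h1, h2, abs_of_nonneg (by linarith), hq]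
      simp only
      ring
    · have h1 : s j i = q ↑j - q ↑i := htel _ _ hij
      have h2 : s i j = 0 := by
        rw [hs]
        simp only
        rw [Finset.Ico_eq_empty (by omega), Finset.sum_empty]
      have hwij : w ↑i ≤ w ↑j := hwanti hij
      rw [h1, h2, abs_of_nonpos (by linarith), hq]
      simp only
      ring
  -- transported Rayleigh quantities
  have hSN : ∑ i : Fin m, ∑ j : Fin m, a' i j * (w ↑i - w ↑j)^2 = rNum G h := by
    have : ∀ i j : Fin m, a' i j * (w ↑i - w ↑j)^2
        = G.adjMatrix ℝ (vtx i) (vtx j) * (h (vtx i) - h (vtx j))^2 := by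
      intro i j
      rw [ha', hwi, hwi]
    rw [Finset.sum_congr rfl (fun i _ => Finset.sum_congr rfl (fun j _ => this i j))]
    rw [Finset.sum_congr rfl (fun i _ =>
      hsum1 (fun v => G.adjMatrix ℝ (vtx i) v * (h (vtx i) - h v)^2))]
    rw [hsum1 (fun u => ∑ v, G.adjMatrix ℝ u v * (h u - h v)^2)]
    rfl
  have hSD : ∑ i : Fin m, ∑ j : Fin m, a' i j * (w ↑i)^2 = rDen G h := by
    have hinner : ∀ i : Fin m, ∑ j : Fin m, a' i j * (w ↑i)^2
        = (G.degree (vtx i) : ℝ) * h (vtx i)^2 := by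
      intro i
      rw [← Finset.sum_mul]
      have : ∑ j : Fin m, a' i j = (G.degree (vtx i) : ℝ) := by
        rw [ha']
        simp only
        rw [hsum1 (fun v => G.adjMatrix ℝ (vtx i) v)]
        exact adj_row_sum G (vtx i)
      rw [this, hwi]
    rw [Finset.sum_congr rfl (fun i _ => hinner i)]
    rw [hsum1 (fun v => (G.degree v : ℝ) * h v^2)]
    rfl
  have hSD' : ∑ i : Fin m, ∑ j : Fin m, a' i j * (w ↑j)^2 = rDen G h := by
    rw [Finset.sum_comm, ← hSD]
    exact Finset.sum_congr rfl (fun j _ => Finset.sum_congr rfl (fun i _ => by rw [ha'symm]))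
  -- Cauchy-Schwarz bound
  have hCS : ∑ i : Fin m, ∑ j : Fin m, a' i j * (|w ↑i - w ↑j| * (w ↑i + w ↑j))
      ≤ 2 * (Real.sqrt (rNum G h) * Real.sqrt (rDen G h)) := by
    set f : Fin m × Fin m → ℝ := fun p => Real.sqrt (a' p.1 p.2) * |w ↑p.1 - w ↑p.2| with hf
    set g : Fin m × Fin m → ℝ := fun p => Real.sqrt (a' p.1 p.2) * (w ↑p.1 + w ↑p.2) with hgg
    have ha'nn : ∀ i j, 0 ≤ a' i j := by
      intro i j
      rw [ha']
      exact adjMatrix_nonneg G _ _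
    have hLHS : ∑ i : Fin m, ∑ j : Fin m, a' i j * (|w ↑i - w ↑j| * (w ↑i + w ↑j))
        = ∑ p : Fin m × Fin m, f p * g p := by
      rw [Fintype.sum_prod_type]
      refine Finset.sum_congr rfl (fun i _ => Finset.sum_congr rfl (fun j _ => ?_))
      rw [hf, hgg]
      simp only
      rw [show Real.sqrt (a' i j) * |w ↑i - w ↑j| * (Real.sqrt (a' i j) * (w ↑i + w ↑j))
        = (Real.sqrt (a' i j) * Real.sqrt (a' i j)) * (|w ↑i - w ↑j| * (w ↑i + w ↑j)) by ring]
      rw [Real.mul_self_sqrt (ha'nn i j)]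
    have hf2 : ∑ p : Fin m × Fin m, f p ^ 2 = rNum G h := by
      rw [← hSN, Fintype.sum_prod_type]
      refine Finset.sum_congr rfl (fun i _ => Finset.sum_congr rfl (fun j _ => ?_))
      rw [hf]
      simp only
      rw [mul_pow, Real.sq_sqrt (ha'nn i j), sq_abs]
    have hg2 : ∑ p : Fin m × Fin m, g p ^ 2 ≤ 4 * rDen G h := by
      have hstep : ∑ p : Fin m × Fin m, g p ^ 2
          ≤ ∑ p : Fin m × Fin m, (2 * (a' p.1 p.2 * (w ↑p.1)^2) + 2 * (a' p.1 p.2 * (w ↑p.2)^2)) := by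
        apply Finset.sum_le_sum
        intro p _
        rw [hgg]
        simp only
        rw [mul_pow, Real.sq_sqrt (ha'nn p.1 p.2)]
        have := ha'nn p.1 p.2
        nlinarith [sq_nonneg (w ↑p.1 - w ↑p.2), sq_nonneg (w ↑p.1 + w ↑p.2)]
      have e1 : ∑ p : Fin m × Fin m, a' p.1 p.2 * (w ↑p.1)^2 = rDen G h := by
        rw [Fintype.sum_prod_type]
        exact hSD
      have e2 : ∑ p : Fin m × Fin m, a' p.1 p.2 * (w ↑p.2)^2 = rDen G h := by
        rw [Fintype.sum_prod_type]
        exact hSD'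
      rw [Finset.sum_add_distrib, ← Finset.mul_sum, ← Finset.mul_sum, e1, e2] at hstep
      linarith
    have hCS0 := Finset.sum_mul_sq_le_sq_mul_sq univ f g
    have hfgnn : 0 ≤ ∑ p : Fin m × Fin m, f p * g p := by
      apply Finset.sum_nonneg
      intro p _
      rw [hf, hgg]
      simp only
      have h1 : (0:ℝ) ≤ Real.sqrt (a' p.1 p.2) := Real.sqrt_nonneg _
      have h2 : (0:ℝ) ≤ |w ↑p.1 - w ↑p.2| := abs_nonneg _
      have h3 : (0:ℝ) ≤ w ↑p.1 + w ↑p.2 := by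
        have := hw0 (↑p.1 : ℕ)
        have := hw0 (↑p.2 : ℕ)
        linarith
      positivity
    rw [hLHS]
    have hsq : (∑ p : Fin m × Fin m, f p * g p)^2 ≤ rNum G h * (4 * rDen G h) := by
      calc (∑ p : Fin m × Fin m, f p * g p)^2
          ≤ (∑ p : Fin m × Fin m, f p ^2) * (∑ p : Fin m × Fin m, g p ^2) := hCS0
        _ ≤ rNum G h * (4 * rDen G h) := by
            rw [hf2]
            apply mul_le_mul_of_nonneg_left hg2 (rNum_nonneg G h)
    have h2s : (2 * (Real.sqrt (rNum G h) * Real.sqrt (rDen G h)))^2 = rNum G h * (4 * rDen G h) := by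
      rw [mul_pow, mul_pow, Real.sq_sqrt (rNum_nonneg G h), Real.sq_sqrt (rDen_nonneg G h)]
      ring
    have hstep1 : ∑ p : Fin m × Fin m, f p * g p ≤ Real.sqrt (rNum G h * (4 * rDen G h)) := by
      rw [Real.le_sqrt hfgnn]
      · exact hsq
      · exact mul_nonneg (rNum_nonneg G h) (by linarith [rDen_nonneg G h])
    have hstep2 : Real.sqrt (rNum G h * (4 * rDen G h))
        = 2 * (Real.sqrt (rNum G h) * Real.sqrt (rDen G h)) := by
      rw [← h2s, Real.sqrt_sq (by positivity)]
    linarith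
  -- combine: T2 ≤ √rNum √rDen
  have hT2bound : T2 ≤ Real.sqrt (rNum G h) * Real.sqrt (rDen G h) := by
    have h2T2 : 2 * T2 = ∑ i : Fin m, ∑ j : Fin m, a' i j * (s i j + s j i) := by
      conv_lhs => rw [two_mul]
      nth_rewrite 2 [hT2swap]
      nth_rewrite 1 [hT2]
      rw [← Finset.sum_add_distrib]
      refine Finset.sum_congr rfl (fun i _ => ?_)
      rw [← Finset.sum_add_distrib]
      exact Finset.sum_congr rfl (fun j _ => by ring)
    have : 2 * T2 ≤ ∑ i : Fin m, ∑ j : Fin m, a' i j * (|w ↑i - w ↑j| * (w ↑i + w ↑j)) := by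
      rw [h2T2]
      refine Finset.sum_le_sum (fun i _ => Finset.sum_le_sum (fun j _ => ?_))
      rw [hskey i j]
    linarith [hCS, this]
  -- final bound with ν₂
  have hc2nn : 0 ≤ 2 * ν₂ := by nlinarith [rNum_nonneg G h, hden, hnum]
  have hfinal : ∑ k ∈ range m, EE k * Δ k ≤ Real.sqrt (2 * ν₂) * ∑ k ∈ range m, VolR k * Δ k := by
    rw [hbd_id, ← hden_id]
    calc T2 ≤ Real.sqrt (rNum G h) * Real.sqrt (rDen G h) := hT2bound
      _ ≤ Real.sqrt (2 * ν₂ * rDen G h) * Real.sqrt (rDen G h) := by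
          apply mul_le_mul_of_nonneg_right _ (Real.sqrt_nonneg _)
          exact Real.sqrt_le_sqrt hnum
      _ = Real.sqrt (2 * ν₂) * rDen G h := by
          rw [Real.sqrt_mul hc2nn, mul_assoc, Real.mul_self_sqrt (rDen_nonneg G h)]
  -- extract a good threshold
  have hextract : ∃ k, k < m ∧ 0 < w k ∧ EE k ≤ Real.sqrt (2 * ν₂) * VolR k := by
    by_contra hcon
    push_neg at hcon
    have hterms : ∀ k ∈ range m, 0 ≤ (EE k - Real.sqrt (2 * ν₂) * VolR k) * Δ k := by
      intro k hk
      rw [mem_range] at hk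
      by_cases hwk : 0 < w k
      · have := hcon k hk hwk
        have := hΔnonneg k
        nlinarith
      · push_neg at hwk
        have hwk0 : w k = 0 := le_antisymm hwk (hw0 k)
        have hΔ0 : Δ k = 0 := by
          have h1 : w (k+1) = 0 := le_antisymm (hwk0 ▸ hwanti (Nat.le_succ k)) (hw0 (k+1))
          rw [hΔ, hq]
          simp only
          rw [hwk0, h1]
          ring
        rw [hΔ0, mul_zero]
    have hpossum : 0 < ∑ k ∈ range m, (EE k - Real.sqrt (2 * ν₂) * VolR k) * Δ k := by
      have hden' : 0 < ∑ k ∈ range m, VolR k * Δ k := by rw [← hden_id]; exact hden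
      obtain ⟨k, hk, hknz⟩ := Finset.exists_ne_zero_of_sum_ne_zero hden'.ne'
      have hkr := hk
      rw [mem_range] at hkr
      have hΔk : 0 < Δ k := by
        rcases lt_or_eq_of_le (hΔnonneg k) with h | h
        · exact h
        · exact absurd (by rw [← h]; ring) hknz
      have hwk : 0 < w k := by
        have : w (k+1)^2 < w k ^2 := by
          have := hΔk
          rw [hΔ, hq] at this
          simp only at this
          linarith
        have h1 := hw0 k
        have h2 := hw0 (k+1)
        nlinarith
      have hVk : 0 < VolR k := by
        rcases lt_or_eq_of_le (hVolRnonneg k) with h | h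
        · exact h
        · exact absurd (by rw [← h]; ring) hknz
      have hEEk := hcon k hkr hwk
      apply Finset.sum_pos' hterms
      refine ⟨k, hk, ?_⟩
      have : 0 < EE k - Real.sqrt (2 * ν₂) * VolR k := by nlinarith
      positivity
    have : ∑ k ∈ range m, (EE k - Real.sqrt (2 * ν₂) * VolR k) * Δ k
        = (∑ k ∈ range m, EE k * Δ k) - Real.sqrt (2 * ν₂) * ∑ k ∈ range m, VolR k * Δ k := by
      rw [Finset.mul_sum, ← Finset.sum_sub_distrib]
      exact Finset.sum_congr rfl (fun k _ => by ring)
    rw [this] at hpossum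
    linarith [hfinal]
  obtain ⟨k, hkm, hwk, hEEk⟩ := hextract
  have hsub : P k ⊆ univ.filter (fun v => 0 < h v) := by
    intro v hv
    rw [hP] at hv
    simp only [mem_image, mem_filter, mem_univ, true_and] at hv
    obtain ⟨i, hik, rfl⟩ := hv
    rw [mem_filter]
    refine ⟨mem_univ _, ?_⟩
    rw [← hwi]
    exact lt_of_lt_of_le hwk (hwanti hik)
  have hhalfP : 2 * graphVol G (P k) ≤ graphVol G univ :=
    le_trans (by have := graphVol_mono G hsub; omega) hhalf
  have hTpos : 2 ≤ graphVol G univ := by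
    rw [graphVol_eq]
    calc 2 ≤ m := hV
      _ = Finset.card (univ : Finset V) := by rw [hm, Finset.card_univ]
      _ = ∑ _v ∈ (univ : Finset V), 1 := by rw [Finset.card_eq_sum_ones]
      _ ≤ ∑ v, G.degree v := Finset.sum_le_sum (fun v _ => hdeg v)
  have hvolP : (graphVol G (P k) : ℝ) = VolR k := by
    have hrw : graphVol G (P k) = ∑ i ∈ univ.filter (fun i : Fin m => (i : ℕ) ≤ k),
        G.degree (vtx i) := by
      rw [graphVol_eq, hP]
      exact Finset.sum_image (fun a _ b _ hab => hbij.1 hab)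
    rw [hrw, Nat.cast_sum, hVolR]
    dsimp only
    have hfe : range (k + 1) = (range m).filter (fun i => i ≤ k) := by
      ext i
      simp only [mem_filter, mem_range]
      omega
    rw [hfe]
    conv_rhs => rw [Finset.sum_filter, hrange (fun i => if i ≤ k then D i else 0)]
    conv_lhs => rw [Finset.sum_filter]
    refine Finset.sum_congr rfl (fun i _ => ?_)
    rw [hDi]
  refine ⟨P k, ?_, ?_, hhalfP, ?_⟩
  · exact ⟨vtx ⟨k, hkm⟩, (hmemP ⟨k, hkm⟩ k).mpr (le_refl k)⟩
  · intro heq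
    rw [heq] at hhalfP
    omega
  · -- boundary bound
    have hbij2 : Function.Bijective (Prod.map vtx vtx) := hbij.prodMap hbij
    have hEEcast : ((graphBoundary G (P k)).ncard : ℝ) = EE k := by
      rw [graphBoundary_ncard G (P k), Finset.card_filter, Nat.cast_sum]
      have step1 : ∀ p : V × V, (((if G.Adj p.1 p.2 ∧ p.1 ∈ P k ∧ p.2 ∉ P k then 1 else 0 : ℕ) : ℝ))
          = (if G.Adj p.1 p.2 ∧ p.1 ∈ P k ∧ p.2 ∉ P k then (1:ℝ) else 0) := by
        intro p
        split <;> norm_num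
      rw [Finset.sum_congr rfl (fun p _ => step1 p)]
      have step2 := Fintype.sum_bijective (Prod.map vtx vtx) hbij2
        (fun p : Fin m × Fin m =>
          if G.Adj (vtx p.1) (vtx p.2) ∧ (p.1 : ℕ) ≤ k ∧ ¬ ((p.2 : ℕ) ≤ k) then (1:ℝ) else 0)
        (fun p : V × V => if G.Adj p.1 p.2 ∧ p.1 ∈ P k ∧ p.2 ∉ P k then (1:ℝ) else 0)
        (fun p => by
          simp only [Prod.map]
          refine if_congr ?_ rfl rfl
          rw [hmemP, hmemP])
      rw [← step2, hEE, Fintype.sum_prod_type]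
    rw [hEEcast, hvolP]
    exact hEEk

end CheegerProof

/-- Cheeger's inequality, upper bound: `Φ(G) ≤ √(2·ν₂)`, where `ν₂` is the second smallest
eigenvalue of the normalized Laplacian of a connected graph on at least 2 vertices with all
degrees at least 1. -/
theorem cheeger_upper_bound
    {V : Type*} [Fintype V] [DecidableEq V]
    (G : SimpleGraph V) [DecidableRel G.Adj]
    (hV : 2 ≤ Fintype.card V) (hconn : G.Connected)
    (hdeg : ∀ v : V, 1 ≤ G.degree v)
    (ν₂ : ℝ) (hν : ν₂ = sortedEigs (normLap G) ⟨1, by omega⟩) :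
    conductance G ≤ Real.sqrt (2 * ν₂) := by
  classical
  have huniv : (Finset.univ : Finset V).Nonempty := by
    rw [← Finset.card_pos, Finset.card_univ]
    omega
  have hspec := exists_test_vector G hV
  rw [← hν] at hspec
  obtain ⟨S, hSne, hSuniv, hShalf, hSbound⟩ := sweep_cut G hV hdeg ν₂
    (exists_halfsupported G huniv ν₂ (exists_rayleigh G hdeg ν₂ hspec))
  have hvolS : 0 < graphVol G S := by
    rw [graphVol_eq]
    obtain ⟨v, hv⟩ := hSne
    calc 0 < 1 := Nat.zero_lt_one
      _ ≤ G.degree v := hdeg v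
      _ ≤ ∑ u ∈ S, G.degree u := Finset.single_le_sum (f := fun u => G.degree u) (fun u _ => Nat.zero_le _) hv
  have hcompl : graphVol G S ≤ graphVol G Sᶜ := by
    have := graphVol_add_compl G S
    omega
  have hmin : min ((graphVol G S : ℝ)) ((graphVol G Sᶜ : ℝ)) = (graphVol G S : ℝ) :=
    min_eq_left (by exact_mod_cast hcompl)
  have hx : ((graphBoundary G S).ncard : ℝ)
      / min ((graphVol G S : ℝ)) ((graphVol G Sᶜ : ℝ)) ≤ Real.sqrt (2 * ν₂) := by
    rw [hmin, div_le_iff₀ (by exact_mod_cast hvolS)]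
    exact hSbound
  have hmem : ((graphBoundary G S).ncard : ℝ)
      / min ((graphVol G S : ℝ)) ((graphVol G Sᶜ : ℝ)) ∈
      {x : ℝ | ∃ S : Finset V, S.Nonempty ∧ S ≠ Finset.univ ∧
        x = (graphBoundary G S).ncard /
          min ((graphVol G S : ℝ)) ((graphVol G Sᶜ : ℝ))} :=
    ⟨S, hSne, hSuniv, rfl⟩
  have hbdd : BddBelow {x : ℝ | ∃ S : Finset V, S.Nonempty ∧ S ≠ Finset.univ ∧
      x = (graphBoundary G S).ncard /
        min ((graphVol G S : ℝ)) ((graphVol G Sᶜ : ℝ))} := by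
    refine ⟨0, ?_⟩
    rintro x ⟨T, _, _, rfl⟩
    apply div_nonneg (Nat.cast_nonneg _)
    exact le_min (Nat.cast_nonneg _) (Nat.cast_nonneg _)
  calc conductance G ≤ ((graphBoundary G S).ncard : ℝ)
        / min ((graphVol G S : ℝ)) ((graphVol G Sᶜ : ℝ)) := csInf_le hbdd hmem
    _ ≤ Real.sqrt (2 * ν₂) := hx
end

section
/- Let G be a connected finite simple graph on a vertex set V with n ≥ 2 vertices, and let L(G) be its Laplacian matrix. Then for every initial vector x : V → ℝ, the consensus dynamics converge to the average value: exp(−t·L(G))x → x̄·𝟙 as t → +∞, where x̄ = (1/n)·∑_{v∈V} x(v) and 𝟙 is the all-ones vector. -/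
open Matrix
open scoped Nat

attribute [local instance] Matrix.linftyOpNormedRing Matrix.linftyOpNormedAlgebra

/-- If `v` is an eigenvector of `A` with eigenvalue `μ`, then it is an eigenvector
of `exp A` with eigenvalue `Real.exp μ`. -/
lemma exp_mulVec_eigen {V : Type*} [Fintype V] [DecidableEq V]
    (A : Matrix V V ℝ) (v : V → ℝ) (μ : ℝ) (h : A *ᵥ v = μ • v) :
    NormedSpace.exp A *ᵥ v = Real.exp μ • v := by
  have hpow : ∀ n : ℕ, A ^ n *ᵥ v = μ ^ n • v := by
    intro n
    induction n with
    | zero => simp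
    | succ n ih =>
      rw [pow_succ, ← Matrix.mulVec_mulVec, h, Matrix.mulVec_smul, ih, smul_smul, pow_succ, mul_comm]
  let f : Matrix V V ℝ →ₗ[ℝ] (V → ℝ) :=
    { toFun := fun M => M *ᵥ v
      map_add' := fun M N => Matrix.add_mulVec M N v
      map_smul' := fun c M => Matrix.smul_mulVec c M v }
  let F : Matrix V V ℝ →L[ℝ] (V → ℝ) := f.toContinuousLinearMap
  have hs : Summable fun n : ℕ => (n !⁻¹ : ℝ) • A ^ n := NormedSpace.expSeries_summable' A
  have h1 : NormedSpace.exp A *ᵥ v = F (∑' n : ℕ, (n !⁻¹ : ℝ) • A ^ n) := by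
    rw [NormedSpace.exp_eq_tsum ℝ]; rfl
  rw [h1, F.map_tsum hs]
  have h2 : ∀ n : ℕ, F ((n !⁻¹ : ℝ) • A ^ n) = (μ ^ n / n !) • v := by
    intro n
    have : F ((n !⁻¹ : ℝ) • A ^ n) = (n !⁻¹ : ℝ) • (A ^ n *ᵥ v) := by
      simp [F, f, Matrix.smul_mulVec]
    rw [this, hpow, smul_smul, div_eq_inv_mul]
  simp_rw [h2]
  rw [(Real.summable_pow_div_factorial μ).tsum_smul_const]
  congr 1
  rw [Real.exp_eq_exp_ℝ, NormedSpace.exp_eq_tsum_div]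

/-- For a connected finite simple graph on at least 2 vertices, the consensus dynamics
`exp(−t·L(G))x` converge to the average-consensus vector `x̄·𝟙` as `t → +∞`. -/
theorem consensus_dynamics_tendsto_average
    {V : Type*} [Fintype V] [DecidableEq V]
    (G : SimpleGraph V) [DecidableRel G.Adj]
    (hV : 2 ≤ Fintype.card V) (hconn : G.Connected)
    (x : V → ℝ) (xbar : ℝ) (hxbar : xbar = (∑ v : V, x v) / Fintype.card V) :
    Filter.Tendsto (fun t : ℝ => NormedSpace.exp ((-t) • G.lapMatrix ℝ) *ᵥ x)
      Filter.atTop (nhds fun _ => xbar) := by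
  classical
  set L := G.lapMatrix ℝ with hLdef
  have hsd : L.PosSemidef := SimpleGraph.posSemidef_lapMatrix ℝ G
  have hL : L.IsHermitian := hsd.1
  set b := hL.eigenvectorBasis with hbdef
  set μ := hL.eigenvalues with hμdef
  have hμnn : ∀ i, 0 ≤ μ i := hsd.eigenvalues_nonneg
  have hcard : (0 : ℝ) < Fintype.card V := by positivity
  -- the constant part is a fixed point
  have hconst : ∀ t : ℝ,
      NormedSpace.exp ((-t) • L) *ᵥ (fun _ => xbar) = fun _ => xbar := by
    intro t
    have h0 : ((-t) • L) *ᵥ (fun _ => xbar) = (0 : ℝ) • (fun _ => xbar) := by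
      have hone : (fun _ : V => xbar) = xbar • (fun _ : V => (1 : ℝ)) := by
        funext v; simp
      rw [hone, Matrix.mulVec_smul, Matrix.smul_mulVec,
        SimpleGraph.lapMatrix_mulVec_const_eq_zero]
      simp
    have := exp_mulVec_eigen ((-t) • L) (fun _ => xbar) 0 h0
    simpa using this
  -- decompose x
  set y : V → ℝ := x - (fun _ => xbar) with hydef
  have hxsplit : x = (fun _ => xbar) + y := by rw [hydef]; ring_nf
  have hysum : ∑ v : V, y v = 0 := by
    have : ∑ v : V, y v = (∑ v : V, x v) - (Fintype.card V : ℝ) * xbar := by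
      simp [hydef, Finset.sum_sub_distrib, mul_comm]
    rw [this, hxbar]
    field_simp
    ring
  -- eigen-expansion of y
  set c : V → ℝ := fun i => inner ℝ (b i) (WithLp.toLp 2 y : EuclideanSpace ℝ V) with hcdef
  have hyexp : y = ∑ i : V, c i • ⇑(b i) := by
    have h := congrArg (WithLp.linearEquiv 2 ℝ (V → ℝ))
      (b.sum_repr (WithLp.toLp 2 y : EuclideanSpace ℝ V))
    rw [map_sum] at h
    simp_rw [_root_.map_smul, b.repr_apply_apply] at h
    exact h.symm
  -- eigenvalue-zero eigenvectors have zero coefficient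
  have hker : ∀ i, μ i = 0 → c i = 0 := by
    intro i hi
    have hvec : L *ᵥ ⇑(b i) = μ i • ⇑(b i) := hL.mulVec_eigenvectorBasis i
    rw [hi, zero_smul] at hvec
    have hker0 : Matrix.toLin' L ⇑(b i) = 0 := by
      rw [Matrix.toLin'_apply]; exact hvec
    have hreach : ∀ u w : V, G.Reachable u w → (b i) u = (b i) w :=
      (SimpleGraph.lapMatrix_mulVec_eq_zero_iff_forall_reachable G).mp hvec
    obtain ⟨v₀⟩ := hconn.nonempty
    have hconstv : ∀ u : V, (b i) u = (b i) v₀ := fun u => hreach u v₀ (hconn u v₀)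
    have : c i = (b i) v₀ * ∑ v : V, y v := by
      rw [hcdef]
      simp only [PiLp.inner_apply, RCLike.inner_apply, conj_trivial]
      rw [Finset.mul_sum]
      refine Finset.sum_congr rfl fun v _ => ?_
      rw [hconstv v, mul_comm]
    rw [this, hysum, mul_zero]
  -- the fluctuating part tends to zero
  have hy0 : Filter.Tendsto (fun t : ℝ => NormedSpace.exp ((-t) • L) *ᵥ y)
      Filter.atTop (nhds 0) := by
    have hform : ∀ t : ℝ, NormedSpace.exp ((-t) • L) *ᵥ y
        = ∑ i : V, (c i * Real.exp ((-t) * μ i)) • ⇑(b i) := by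
      intro t
      rw [hyexp]
      rw [← Matrix.mulVecLin_apply, map_sum]
      simp_rw [Matrix.mulVecLin_apply]
      refine Finset.sum_congr rfl fun i _ => ?_
      have hvec : ((-t) • L) *ᵥ ⇑(b i) = ((-t) * μ i) • ⇑(b i) := by
        rw [Matrix.smul_mulVec, hL.mulVec_eigenvectorBasis i, smul_smul]
      rw [Matrix.mulVec_smul, exp_mulVec_eigen _ _ _ hvec, smul_smul]
    simp_rw [hform]
    have : (0 : V → ℝ) = ∑ i : V, (0 : V → ℝ) := by simp
    rw [this]
    refine tendsto_finset_sum _ fun i _ => ?_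
    rcases eq_or_lt_of_le (hμnn i) with h0 | hpos
    · have hci : c i = 0 := hker i h0.symm
      simp [hci]
    · have h1 : Filter.Tendsto (fun t : ℝ => c i * Real.exp ((-t) * μ i))
          Filter.atTop (nhds 0) := by
        have h2 : Filter.Tendsto (fun t : ℝ => (-t) * μ i) Filter.atTop Filter.atBot := by
          have h2a : Filter.Tendsto (fun t : ℝ => t * μ i) Filter.atTop Filter.atTop :=
            Filter.tendsto_id.atTop_mul_const hpos
          have h2b := Filter.tendsto_neg_atTop_atBot.comp h2a
          exact h2b.congr fun t => (neg_mul t (μ i)).symm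
        have h3 := Real.tendsto_exp_atBot.comp h2
        have h4 := h3.const_mul (c i)
        simpa using h4
      have := h1.smul_const (⇑(b i) : V → ℝ)
      simpa using this
  -- combine
  have hsplit : ∀ t : ℝ, NormedSpace.exp ((-t) • L) *ᵥ x
      = (fun _ => xbar) + NormedSpace.exp ((-t) • L) *ᵥ y := by
    intro t
    rw [hxsplit, Matrix.mulVec_add, hconst t]
  simp_rw [hsplit]
  have := hy0.const_add (fun _ : V => xbar)
  simpa using this
end
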